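/- For the polynomial Δ(r) = r⁴ + (a²+1)r² − 2𝔪r + a² with parameters 𝔪 > 0 and |a| < 1: Δ has a positive real root if and only if 𝔪 ≥ (1/(3√6)) (√(1+14a²+a⁴) + 2a² + 2) (√(1+14a²+a⁴) − a² − 1)^{1/2}, and equality holds precisely when Δ has a double positive root. -/

import Mathlib

/-- The Kerr–AdS horizon polynomial `Δ(r) = r⁴ + (a²+1)r² − 2𝔪r + a²` with `Λ = -3`. -/
noncomputable def KerrAdSΔ (mfr a r : ℝ) : ℝ :=
  r ^ 4 + (a ^ 2 + 1) * r ^ 2 - 2 * mfr * r + a ^ 2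

/-- The critical (extremal) mass parameter for Kerr–AdS. -/
noncomputable def mcrit (a : ℝ) : ℝ :=
  (1 / (3 * Real.sqrt 6)) * (Real.sqrt (1 + 14 * a ^ 2 + a ^ 4) + 2 * a ^ 2 + 2) *
    Real.sqrt (Real.sqrt (1 + 14 * a ^ 2 + a ^ 4) - a ^ 2 - 1)

lemma kerr_deriv (mfr a r : ℝ) :
    deriv (KerrAdSΔ mfr a) r = 4*r^3 + 2*(a^2+1)*r - 2*mfr := by
  have h : HasDerivAt (KerrAdSΔ mfr a) (4*r^3 + 2*(a^2+1)*r - 2*mfr) r := by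
    show HasDerivAt (fun x : ℝ => x ^ 4 + (a ^ 2 + 1) * x ^ 2 - 2 * mfr * x + a ^ 2) _ r
    have h1 : HasDerivAt (fun x : ℝ => x ^ 4) (4 * r ^ 3) r := by
      simpa using hasDerivAt_pow 4 r
    have h2 : HasDerivAt (fun x : ℝ => (a ^ 2 + 1) * x ^ 2) ((a ^ 2 + 1) * (2 * r)) r := by
      simpa using (hasDerivAt_pow 2 r).const_mul (a ^ 2 + 1)
    have h3 : HasDerivAt (fun x : ℝ => 2 * mfr * x) (2 * mfr) r := by
      simpa using (hasDerivAt_id r).const_mul (2 * mfr)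
    have h4 := ((h1.add h2).sub h3).add_const (a ^ 2)
    exact h4.congr_deriv (by ring)
  exact h.deriv

lemma kerr_b (a : ℝ) :
    ∃ b : ℝ, 0 ≤ b ∧ 3*b^4 + (a^2+1)*b^2 = a^2 ∧ mcrit a = 2*b^3 + (a^2+1)*b ∧
      (∀ r : ℝ, KerrAdSΔ (mcrit a) a r = (r - b)^2 * (r^2 + 2*b*r + 3*b^2 + a^2 + 1)) := by
  set s := Real.sqrt (1 + 14 * a ^ 2 + a ^ 4) with hs
  have hsq : (0:ℝ) ≤ 1 + 14*a^2 + a^4 := by positivity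
  have hs2 : s ^ 2 = 1 + 14*a^2 + a^4 := Real.sq_sqrt hsq
  have hs0 : 0 ≤ s := Real.sqrt_nonneg _
  have hsge : a^2 + 1 ≤ s := by nlinarith [hs2, hs0]
  refine ⟨Real.sqrt ((s - a^2 - 1)/6), Real.sqrt_nonneg _, ?_, ?_, ?_⟩
  all_goals set b := Real.sqrt ((s - a^2 - 1)/6) with hbdef
  · have hb2 : b ^ 2 = (s - a^2 - 1)/6 := Real.sq_sqrt (by linarith)
    have hseq : s = 6*b^2 + a^2 + 1 := by linarith
    rw [hseq] at hs2
    linear_combination hs2 / 12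
  · have hb2 : b ^ 2 = (s - a^2 - 1)/6 := Real.sq_sqrt (by linarith)
    have hb0 : 0 ≤ b := Real.sqrt_nonneg _
    have hseq : s = 6*b^2 + a^2 + 1 := by linarith
    have h6 : (0:ℝ) < Real.sqrt 6 := Real.sqrt_pos.mpr (by norm_num)
    have h66 : Real.sqrt 6 * Real.sqrt 6 = 6 := Real.mul_self_sqrt (by norm_num)
    have hrw : Real.sqrt (s - a^2 - 1) = Real.sqrt 6 * b := by
      rw [show s - a^2 - 1 = 6 * b^2 by linarith, Real.sqrt_mul (by norm_num),
        Real.sqrt_sq hb0]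
    have : mcrit a = (1 / (3 * Real.sqrt 6)) * (s + 2*a^2 + 2) * Real.sqrt (s - a^2 - 1) := by
      rw [mcrit]
    rw [this, hrw, hseq]
    field_simp
    nlinarith [h66, h6, sq_nonneg (b*Real.sqrt 6)]
  · intro r
    have hb2 : b ^ 2 = (s - a^2 - 1)/6 := Real.sq_sqrt (by linarith)
    have hb0 : 0 ≤ b := Real.sqrt_nonneg _
    have hseq : s = 6*b^2 + a^2 + 1 := by linarith
    have hE : 3*b^4 + (a^2+1)*b^2 = a^2 := by
      rw [hseq] at hs2; linear_combination hs2 / 12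
    have h6 : (0:ℝ) < Real.sqrt 6 := Real.sqrt_pos.mpr (by norm_num)
    have h66 : Real.sqrt 6 * Real.sqrt 6 = 6 := Real.mul_self_sqrt (by norm_num)
    have hrw : Real.sqrt (s - a^2 - 1) = Real.sqrt 6 * b := by
      rw [show s - a^2 - 1 = 6 * b^2 by linarith, Real.sqrt_mul (by norm_num),
        Real.sqrt_sq hb0]
    have hmc : mcrit a = 2*b^3 + (a^2+1)*b := by
      have h : mcrit a = (1 / (3 * Real.sqrt 6)) * (s + 2*a^2 + 2) * Real.sqrt (s - a^2 - 1) := by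
        rw [mcrit]
      rw [h, hrw, hseq]
      field_simp
      nlinarith [h66, h6, sq_nonneg (b*Real.sqrt 6)]
    rw [KerrAdSΔ, hmc]
    linear_combination -hE


theorem stmt4 (mfr a : ℝ) (hm : 0 < mfr) (ha : |a| < 1) :
    ((∃ r > 0, KerrAdSΔ mfr a r = 0) ↔ mcrit a ≤ mfr) ∧
      (mfr = mcrit a ↔ ∃ r > 0, KerrAdSΔ mfr a r = 0 ∧ deriv (KerrAdSΔ mfr a) r = 0) := by
  obtain ⟨b, hb0, hE, hmc, hKey⟩ := kerr_b a
  have hcont : Continuous (KerrAdSΔ mfr a) := by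
    unfold KerrAdSΔ; fun_prop
  constructor
  · constructor
    · rintro ⟨r, hr, hΔ⟩
      have hQ : 0 ≤ r^2 + 2*b*r + 3*b^2 + a^2 + 1 := by
        nlinarith [mul_nonneg hb0 hr.le, sq_nonneg r, sq_nonneg b, sq_nonneg a]
      have h1 : 0 ≤ KerrAdSΔ (mcrit a) a r := by
        rw [hKey r]; exact mul_nonneg (sq_nonneg _) hQ
      rw [KerrAdSΔ] at hΔ h1
      nlinarith [hΔ, h1, hr]
    · intro hm'
      -- find c > 0 with f c ≤ 0
      obtain ⟨c, hc0, hfc⟩ : ∃ c > 0, KerrAdSΔ mfr a c ≤ 0 := by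
        rcases eq_or_lt_of_le hb0 with hb | hb
        · -- b = 0, hence a = 0
          have ha0 : a^2 = 0 := by nlinarith [hE]
          refine ⟨min mfr 1, lt_min hm one_pos, ?_⟩
          have h1 : min mfr 1 ≤ mfr := min_le_left _ _
          have h2 : min mfr 1 ≤ 1 := min_le_right _ _
          have h3 : 0 < min mfr 1 := lt_min hm one_pos
          rw [KerrAdSΔ, ha0]
          have hc2 : 0 ≤ (min mfr 1)^2 * (1 - (min mfr 1)^2) := by
            apply mul_nonneg (sq_nonneg _); nlinarith
          have hc3 : 0 ≤ (min mfr 1) * (mfr - min mfr 1) := by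
            apply mul_nonneg h3.le; linarith
          nlinarith [hc2, hc3]
        · refine ⟨b, hb, ?_⟩
          have h0 : KerrAdSΔ (mcrit a) a b = 0 := by rw [hKey b]; ring
          rw [KerrAdSΔ] at h0 ⊢
          nlinarith [mul_nonneg (sub_nonneg.mpr hm') hb.le]
      set R := max c (max 1 (2*mfr)) with hR
      have hcR : c ≤ R := le_max_left _ _
      have h1R : (1:ℝ) ≤ R := le_trans (le_max_left _ _) (le_max_right _ _)
      have hmR : 2*mfr ≤ R := le_trans (le_max_right _ _) (le_max_right _ _)
      have hR0 : (0:ℝ) < R := by linarith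
      have hfR : 0 ≤ KerrAdSΔ mfr a R := by
        rw [KerrAdSΔ]
        nlinarith [sq_nonneg a, sq_nonneg R, mul_pos hR0 hR0,
          mul_nonneg (mul_nonneg hR0.le hR0.le) (sub_nonneg.mpr h1R),
          mul_nonneg hR0.le (sub_nonneg.mpr hmR)]
      have hIV := intermediate_value_Icc hcR (hcont.continuousOn)
      obtain ⟨r, hrmem, hfr⟩ := hIV ⟨hfc, hfR⟩
      exact ⟨r, lt_of_lt_of_le hc0 hrmem.1, hfr⟩
  · constructor
    · intro hmm
      have hbpos : 0 < b := by nlinarith [hmc, hmm, hm, sq_nonneg a, sq_nonneg b]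
      refine ⟨b, hbpos, ?_, ?_⟩
      · rw [hmm, hKey b]; ring
      · rw [kerr_deriv, hmm, hmc]; ring
    · rintro ⟨r, hr, hΔ, hd⟩
      rw [kerr_deriv] at hd
      rw [KerrAdSΔ] at hΔ
      have h4 : 3*r^4 + (a^2+1)*r^2 = a^2 := by linear_combination r * hd - hΔ
      have h6 : (r^2 - b^2) * (3*r^2 + 3*b^2 + a^2 + 1) = 0 := by
        linear_combination h4 - hE
      have h7 : r^2 = b^2 := by
        rcases mul_eq_zero.mp h6 with h | h
        · linarith
        · nlinarith [sq_nonneg r, sq_nonneg b, sq_nonneg a]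
      have h8 : (r - b) * (r + b) = 0 := by linear_combination h7
      have hrb : r = b := by
        rcases mul_eq_zero.mp h8 with h | h
        · linarith
        · linarith
      rw [hmc, ← hrb]
      linarith [hd]
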